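/- Let T_L and U_L denote the Chebyshev polynomials of the first and second kind. For simple random walk Q on the path V = {v_0, ..., v_L} (L ≥ 2) with a = v_0, b = v_L, the first-passage generating function satisfies F_V(a, b | z) = 1/T_L(z), i.e., φ(z) = T_L(z); moreover ψ(z) = 1/U_{L−1}(z), where ψ(z) = Σ_{u,v∈V^o} q(a,u) G_{V^o}(u,v|z) q(v,b) + q(a,b) and G_{V^o} is the resolvent of the restriction of Q to the interior {v_1,...,v_{L−1}}. -/

import Mathlib

open Polynomial

noncomputable section

/-- Transition matrix of simple random walk on the path `v_0, …, v_L`. -/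
def pathQ (L : ℕ) : Matrix (Fin (L + 1)) (Fin (L + 1)) ℝ :=
  Matrix.of fun i j =>
    (if (i : ℕ) + 1 = (j : ℕ) ∨ (j : ℕ) + 1 = (i : ℕ) then (1 : ℝ) else 0) /
      (∑ j' : Fin (L + 1), if (i : ℕ) + 1 = (j' : ℕ) ∨ (j' : ℕ) + 1 = (i : ℕ) then (1 : ℝ) else 0)

/-- Interior vertices of the path: `V° = {v_1, …, v_{L-1}}`. -/
abbrev pathVo (L : ℕ) := {i : Fin (L + 1) // i ≠ 0 ∧ i ≠ Fin.last L}

/-- Restriction of the path walk to the interior, as a complex matrix. -/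
def pathQvo (L : ℕ) : Matrix (pathVo L) (pathVo L) ℂ :=
  Matrix.of fun u v => ((pathQ L u.1 v.1 : ℝ) : ℂ)

end

namespace Stmt16Aux

noncomputable section

lemma sum_ite_coe {M : Type*} [AddCommMonoid M] (L k : ℕ) (c : Fin (L + 1) → M) :
    (∑ j : Fin (L + 1), if (j : ℕ) = k then c j else 0)
      = if h : k < L + 1 then c ⟨k, h⟩ else 0 := by
  split_ifs with h
  · rw [Finset.sum_eq_single ⟨k, h⟩]
    · simp
    · intro j _ hj
      rw [if_neg]
      intro hc
      exact hj (Fin.ext hc)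
    · intro hj; exact absurd (Finset.mem_univ _) hj
  · refine Finset.sum_eq_zero fun j _ => ?_
    rw [if_neg]
    have := j.isLt
    omega

lemma degSum (L : ℕ) (i : Fin (L + 1)) :
    (∑ j' : Fin (L + 1), if (i : ℕ) + 1 = (j' : ℕ) ∨ (j' : ℕ) + 1 = (i : ℕ) then (1 : ℝ) else 0)
      = (if (i : ℕ) + 1 ≤ L then 1 else 0) + (if 1 ≤ (i : ℕ) then 1 else 0) := by
  have split : ∀ j' : Fin (L + 1),
      (if (i : ℕ) + 1 = (j' : ℕ) ∨ (j' : ℕ) + 1 = (i : ℕ) then (1 : ℝ) else 0)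
        = (if (j' : ℕ) = (i : ℕ) + 1 then (1 : ℝ) else 0)
          + (if (j' : ℕ) = (i : ℕ) - 1 ∧ 1 ≤ (i : ℕ) then (1 : ℝ) else 0) := by
    intro j'
    split_ifs <;>
      first
      | rfl
      | (push_cast; ring1)
      | (exfalso; omega)
      | (exfalso; simp only [or_false, false_or, not_or] at *; omega)
      | norm_num
  simp_rw [split]
  rw [Finset.sum_add_distrib, sum_ite_coe]
  by_cases hi : 1 ≤ (i : ℕ)
  · have e2 : ∀ j' : Fin (L + 1),
        (if (j' : ℕ) = (i : ℕ) - 1 ∧ 1 ≤ (i : ℕ) then (1 : ℝ) else 0)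
          = (if (j' : ℕ) = (i : ℕ) - 1 then (1 : ℝ) else 0) := by
      intro j'; simp [hi]
    simp_rw [e2]
    rw [sum_ite_coe]
    have h1 : (i : ℕ) - 1 < L + 1 := by have := i.isLt; omega
    rw [dif_pos h1, if_pos hi]
    have := i.isLt
    by_cases h : (i : ℕ) + 1 ≤ L
    · rw [dif_pos (by omega), if_pos h]
    · rw [dif_neg (by omega), if_neg h]
  · have e2 : ∀ j' : Fin (L + 1),
        (if (j' : ℕ) = (i : ℕ) - 1 ∧ 1 ≤ (i : ℕ) then (1 : ℝ) else 0) = 0 := by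
      intro j'; rw [if_neg]; intro hc; exact hi hc.2
    simp_rw [e2]
    rw [Finset.sum_const, smul_zero, if_neg hi]
    have := i.isLt
    by_cases h : (i : ℕ) + 1 ≤ L
    · rw [dif_pos (by omega), if_pos h]
    · rw [dif_neg (by omega), if_neg h]

lemma pathQ_apply (L : ℕ) (i j : Fin (L + 1)) :
    pathQ L i j =
      (if (i : ℕ) + 1 = (j : ℕ) ∨ (j : ℕ) + 1 = (i : ℕ) then (1 : ℝ) else 0) /
        ((if (i : ℕ) + 1 ≤ L then 1 else 0) + (if 1 ≤ (i : ℕ) then 1 else 0)) := by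
  rw [pathQ, Matrix.of_apply, degSum]

lemma pathQ_zero (L : ℕ) (hL : 1 ≤ L) (j : Fin (L + 1)) :
    pathQ L 0 j = if (j : ℕ) = 1 then 1 else 0 := by
  rw [pathQ_apply]
  rw [Fin.val_zero]
  have hd : (if 0 + 1 ≤ L then (1 : ℝ) else 0) + (if 1 ≤ 0 then (1 : ℝ) else 0) = 1 := by
    rw [if_pos (show 0 + 1 ≤ L by omega), if_neg (show ¬(1 : ℕ) ≤ 0 by omega)]; norm_num
  rw [hd, div_one]
  split_ifs <;>
      first
      | rfl
      | (push_cast; ring1)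
      | (exfalso; omega)
      | (exfalso; simp only [or_false, false_or, not_or] at *; omega)
      | norm_num

lemma pathQ_mid (L k : ℕ) (hk : k < L + 1) (h1 : 1 ≤ k) (h2 : k + 1 ≤ L) (j : Fin (L + 1)) :
    pathQ L ⟨k, hk⟩ j = (if k + 1 = (j : ℕ) ∨ (j : ℕ) + 1 = k then (1 : ℝ) else 0) / 2 := by
  rw [pathQ_apply]
  simp only [Fin.val_mk]
  have hd : (if k + 1 ≤ L then (1 : ℝ) else 0) + (if 1 ≤ k then (1 : ℝ) else 0) = 2 := by
    rw [if_pos h2, if_pos h1]; norm_num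
  rw [hd]

lemma pathQ_last (L : ℕ) (hL : 1 ≤ L) (j : Fin (L + 1)) :
    pathQ L (Fin.last L) j = if (j : ℕ) + 1 = L then 1 else 0 := by
  rw [pathQ_apply]
  simp only [Fin.val_last]
  have hd : (if L + 1 ≤ L then (1 : ℝ) else 0) + (if 1 ≤ L then (1 : ℝ) else 0) = 1 := by
    rw [if_neg (by omega), if_pos (by omega)]; norm_num
  rw [hd, div_one]
  have := j.isLt
  split_ifs <;>
      first
      | rfl
      | (push_cast; ring1)
      | (exfalso; omega)
      | (exfalso; simp only [or_false, false_or, not_or] at *; omega)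
      | norm_num

-- row sums of the complex matrix against a vector
lemma rowsum_zero (L : ℕ) (hL : 2 ≤ L) (c : Fin (L + 1) → ℂ) :
    (∑ j, ((pathQ L).map Complex.ofReal) 0 j * c j) = c ⟨1, by omega⟩ := by
  have key : ∀ j, ((pathQ L).map Complex.ofReal) 0 j * c j
      = if (j : ℕ) = 1 then c j else 0 := by
    intro j
    rw [Matrix.map_apply, pathQ_zero L (by omega)]
    split_ifs <;> simp
  simp_rw [key]
  rw [sum_ite_coe, dif_pos]

lemma rowsum_last (L : ℕ) (hL : 2 ≤ L) (c : Fin (L + 1) → ℂ) :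
    (∑ j, ((pathQ L).map Complex.ofReal) (Fin.last L) j * c j) = c ⟨L - 1, by omega⟩ := by
  have key : ∀ j, ((pathQ L).map Complex.ofReal) (Fin.last L) j * c j
      = if (j : ℕ) = L - 1 then c j else 0 := by
    intro j
    rw [Matrix.map_apply, pathQ_last L (by omega)]
    have := j.isLt
    split_ifs <;>
      first
      | rfl
      | (push_cast; ring1)
      | (exfalso; omega)
      | (exfalso; simp only [or_false, false_or, not_or] at *; omega)
      | norm_num
  simp_rw [key]
  rw [sum_ite_coe, dif_pos]

lemma rowsum_mid (L k : ℕ) (hk : k < L + 1) (h1 : 1 ≤ k) (h2 : k + 1 ≤ L)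
    (c : Fin (L + 1) → ℂ) :
    (∑ j, ((pathQ L).map Complex.ofReal) ⟨k, hk⟩ j * c j)
      = (c ⟨k + 1, by omega⟩ + c ⟨k - 1, by omega⟩) / 2 := by
  have key : ∀ j, ((pathQ L).map Complex.ofReal) ⟨k, hk⟩ j * c j
      = ((if (j : ℕ) = k + 1 then c j else 0) + (if (j : ℕ) = k - 1 then c j else 0)) / 2 := by
    intro j
    rw [Matrix.map_apply, pathQ_mid L k hk h1 h2]
    have := j.isLt
    split_ifs <;>
      first
      | rfl
      | (push_cast; ring1)
      | (exfalso; omega)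
      | (exfalso; simp only [or_false, false_or, not_or] at *; omega)
      | norm_num
  simp_rw [key]
  rw [← Finset.sum_div, Finset.sum_add_distrib, sum_ite_coe, sum_ite_coe,
    dif_pos (by omega : k + 1 < L + 1), dif_pos (by omega : k - 1 < L + 1)]

-- interior machinery
lemma vo_val {L : ℕ} (u : pathVo L) : 1 ≤ (u.1 : ℕ) ∧ (u.1 : ℕ) + 1 ≤ L := by
  have h0' : (u.1 : ℕ) ≠ 0 := fun hc => u.2.1 (Fin.ext (by simpa using hc))
  have hl' : (u.1 : ℕ) ≠ L := fun hc => u.2.2 (Fin.ext (by simpa using hc))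
  have := u.1.isLt
  omega

def mkVo (L k : ℕ) (h1 : 1 ≤ k) (h2 : k + 1 ≤ L) : pathVo L :=
  ⟨⟨k, by omega⟩, by
    refine ⟨?_, ?_⟩ <;> rw [Ne, Fin.ext_iff] <;>
      simp only [Fin.val_mk, Fin.val_zero, Fin.val_last] <;> omega⟩

lemma sum_vo {M : Type*} [AddCommMonoid M] (L k : ℕ) (h1 : 1 ≤ k) (h2 : k + 1 ≤ L)
    (c : pathVo L → M) :
    (∑ u : pathVo L, if (u.1 : ℕ) = k then c u else 0) = c (mkVo L k h1 h2) := by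
  rw [Finset.sum_eq_single (mkVo L k h1 h2)]
  · have hv : ((mkVo L k h1 h2).1 : ℕ) = k := rfl
    rw [if_pos hv]
  · intro u _ hu
    rw [if_neg]
    intro hc
    exact hu (Subtype.ext (Fin.ext hc))
  · intro h; exact absurd (Finset.mem_univ _) h

lemma sum_vo_zero {M : Type*} [AddCommMonoid M] (L k : ℕ) (h : k = 0 ∨ L ≤ k)
    (c : pathVo L → M) :
    (∑ u : pathVo L, if (u.1 : ℕ) = k then c u else 0) = 0 := by
  refine Finset.sum_eq_zero fun u _ => ?_
  have := vo_val u
  rw [if_neg]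
  omega

lemma pathQ_int (L : ℕ) (v : pathVo L) (j : Fin (L + 1)) :
    pathQ L v.1 j = (if (v.1 : ℕ) + 1 = (j : ℕ) ∨ (j : ℕ) + 1 = (v.1 : ℕ) then (1 : ℝ) else 0) / 2 := by
  obtain ⟨h1, h2⟩ := vo_val v
  rw [pathQ_apply]
  have hd : (if (v.1 : ℕ) + 1 ≤ L then (1 : ℝ) else 0) + (if 1 ≤ (v.1 : ℕ) then (1 : ℝ) else 0)
      = 2 := by
    rw [if_pos h2, if_pos h1]; norm_num
  rw [hd]

lemma pathQvo_apply (L : ℕ) (u v : pathVo L) :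
    pathQvo L u v = ((pathQ L u.1 v.1 : ℝ) : ℂ) := rfl

lemma rowsum_vo (L k : ℕ) (hL : 2 ≤ L) (h1 : 1 ≤ k) (h2 : k + 1 ≤ L) (w : pathVo L → ℂ) :
    (∑ u : pathVo L, pathQvo L (mkVo L k h1 h2) u * w u)
      = ((if h : k + 2 ≤ L then w (mkVo L (k + 1) (by omega) h) else 0)
          + (if h : 2 ≤ k then w (mkVo L (k - 1) (by omega) (by omega)) else 0)) / 2 := by
  have key : ∀ u : pathVo L, pathQvo L (mkVo L k h1 h2) u * w u
      = ((if (u.1 : ℕ) = k + 1 then w u else 0) + (if (u.1 : ℕ) = k - 1 then w u else 0)) / 2 := by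
    intro u
    rw [pathQvo_apply, pathQ_int L (mkVo L k h1 h2) u.1]
    have hmk : ((mkVo L k h1 h2).1 : ℕ) = k := rfl
    rw [hmk]
    have := vo_val u
    split_ifs <;>
      first
      | rfl
      | (push_cast; ring1)
      | (exfalso; omega)
      | (exfalso; simp only [or_false, false_or, not_or] at *; omega)
      | norm_num
  simp_rw [key]
  rw [← Finset.sum_div, Finset.sum_add_distrib]
  congr 1
  congr 1
  · by_cases h : k + 2 ≤ L
    · rw [sum_vo L (k + 1) (by omega) h, dif_pos h]
    · rw [sum_vo_zero L (k + 1) (by omega), dif_neg h]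
  · by_cases h : 2 ≤ k
    · rw [sum_vo L (k - 1) (by omega) (by omega), dif_pos h]
    · rw [sum_vo_zero L (k - 1) (by omega), dif_neg h]

end

end Stmt16Aux

open Stmt16Aux in
/-- For SRW `Q` on the path of length `L ≥ 2` with `a = v_0`, `b = v_L`:
`φ(z) = 1/F_V(a,b|z) = T_L(z)`, i.e. `G(b,b|z) = T_L(z) · G(a,b|z)`, and
`ψ(z) = 1/U_{L-1}(z)`, i.e. `ψ(z) · U_{L-1}(z) = 1`, where `T_L, U_{L-1}` are the
Chebyshev polynomials of the first and second kind. -/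
theorem stmt16 (L : ℕ) (hL : 2 ≤ L) (z : ℂ) :
    (z ∉ spectrum ℂ ((pathQ L).map Complex.ofReal) →
      ((z • (1 : Matrix (Fin (L + 1)) (Fin (L + 1)) ℂ) -
          (pathQ L).map Complex.ofReal)⁻¹) (Fin.last L) (Fin.last L)
        = (Polynomial.Chebyshev.T ℂ L).eval z *
          ((z • (1 : Matrix (Fin (L + 1)) (Fin (L + 1)) ℂ) -
            (pathQ L).map Complex.ofReal)⁻¹) 0 (Fin.last L)) ∧
    (z ∉ spectrum ℂ (pathQvo L) →
      ((∑ u : pathVo L, ∑ v : pathVo L,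
          ((pathQ L 0 u.1 : ℝ) : ℂ) *
            ((z • (1 : Matrix (pathVo L) (pathVo L) ℂ) - pathQvo L)⁻¹) u v *
            ((pathQ L v.1 (Fin.last L) : ℝ) : ℂ))
        + ((pathQ L 0 (Fin.last L) : ℝ) : ℂ)) *
        (Polynomial.Chebyshev.U ℂ (L - 1)).eval z = 1) := by
  constructor
  · -- Part 1
    intro hz
    rw [spectrum.notMem_iff, Algebra.algebraMap_eq_smul_one] at hz
    set Qc : Matrix (Fin (L + 1)) (Fin (L + 1)) ℂ := (pathQ L).map Complex.ofReal with hQc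
    set A : Matrix (Fin (L + 1)) (Fin (L + 1)) ℂ := z • 1 - Qc with hA
    have hinv : A * A⁻¹ = 1 :=
      Matrix.mul_nonsing_inv _ ((Matrix.isUnit_iff_isUnit_det A).mp hz)
    set c : Fin (L + 1) → ℂ := fun i => A⁻¹ i (Fin.last L) with hc
    have row : ∀ i, (∑ j, A i j * c j) = if i = Fin.last L then 1 else 0 := by
      intro i
      have h := congrFun (congrFun hinv i) (Fin.last L)
      rw [Matrix.mul_apply] at h
      rw [h, Matrix.one_apply]
    have rowA : ∀ i, (∑ j, A i j * c j) = z * c i - ∑ j, Qc i j * c j := by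
      intro i
      have e : ∀ j, A i j * c j = (if i = j then z * c j else 0) - Qc i j * c j := by
        intro j
        rw [hA, Matrix.sub_apply, Matrix.smul_apply, Matrix.one_apply, smul_eq_mul]
        split_ifs <;> ring
      simp_rw [e]
      rw [Finset.sum_sub_distrib, Finset.sum_ite_eq]
      simp
    set c' : ℕ → ℂ := fun k => if h : k < L + 1 then c ⟨k, h⟩ else 0 with hc'
    have hc'eq : ∀ k (h : k < L + 1), c' k = c ⟨k, h⟩ := fun k h => dif_pos h
    have E0 : z * c' 0 - c' 1 = 0 := by
      have hr := row 0
      rw [rowA, rowsum_zero L hL c] at hr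
      rw [if_neg (show (0 : Fin (L + 1)) ≠ Fin.last L by
        intro hcon
        have := congrArg Fin.val hcon
        simp only [Fin.val_zero, Fin.val_last] at this
        omega)] at hr
      have h0 : (0 : Fin (L + 1)) = ⟨0, by omega⟩ := by apply Fin.ext; simp
      rw [hc'eq 0 (by omega), hc'eq 1 (by omega)]
      rw [h0] at hr
      exact hr
    have Emid : ∀ k, 1 ≤ k → k + 1 ≤ L → z * c' k - (c' (k + 1) + c' (k - 1)) / 2 = 0 := by
      intro k h1 h2
      have hr := row ⟨k, by omega⟩
      rw [rowA, rowsum_mid L k (by omega) h1 h2 c] at hr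
      rw [if_neg (show (⟨k, by omega⟩ : Fin (L + 1)) ≠ Fin.last L by
        intro hcon
        have := congrArg Fin.val hcon
        simp only [Fin.val_mk, Fin.val_last] at this
        omega)] at hr
      rw [hc'eq k (by omega), hc'eq (k + 1) (by omega), hc'eq (k - 1) (by omega)]
      exact hr
    have key : ∀ k, k ≤ L → c' k = (Polynomial.Chebyshev.T ℂ (k : ℤ)).eval z * c' 0 := by
      intro k
      induction k using Nat.strong_induction_on with
      | _ k ih =>
        intro hk
        match k, ih with
        | 0, _ => simp [Polynomial.Chebyshev.T_zero]
        | 1, _ =>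
          simp only [Nat.cast_one, Polynomial.Chebyshev.T_one, Polynomial.eval_X]
          linear_combination (-1 : ℂ) * E0
        | (n + 2), ih =>
          have ha := ih (n + 1) (by omega) (by omega)
          have hb := ih n (by omega) (by omega)
          have hE := Emid (n + 1) (by omega) (by omega)
          have hcast : ((n + 2 : ℕ) : ℤ) = (n : ℤ) + 2 := by push_cast; ring
          have hcast1 : ((n + 1 : ℕ) : ℤ) = (n : ℤ) + 1 := by push_cast; ring
          rw [hcast, Polynomial.Chebyshev.T_add_two]
          rw [hcast1] at ha
          simp only [Polynomial.eval_sub, Polynomial.eval_mul, Polynomial.eval_ofNat,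
            Polynomial.eval_X]
          have hn : n + 1 + 1 = n + 2 := rfl
          have hn2 : n + 1 - 1 = n := rfl
          rw [hn, hn2] at hE
          linear_combination (-2 : ℂ) * hE + 2 * z * ha - hb
    have hk := key L le_rfl
    rw [hc'eq L (by omega), hc'eq 0 (by omega)] at hk
    have h0 : (⟨0, by omega⟩ : Fin (L + 1)) = 0 := by apply Fin.ext; simp
    have hlast : (⟨L, by omega⟩ : Fin (L + 1)) = Fin.last L := rfl
    rw [h0, hlast] at hk
    exact hk
  · -- Part 2
    intro hz
    rw [spectrum.notMem_iff, Algebra.algebraMap_eq_smul_one] at hz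
    set B : Matrix (pathVo L) (pathVo L) ℂ := z • 1 - pathQvo L with hB
    have hinv : B * B⁻¹ = 1 :=
      Matrix.mul_nonsing_inv _ ((Matrix.isUnit_iff_isUnit_det B).mp hz)
    set vm : pathVo L := mkVo L (L - 1) (by omega) (by omega) with hvm
    set d : pathVo L → ℂ := fun v => B⁻¹ v vm with hd
    have row : ∀ v, (∑ u, B v u * d u) = if v = vm then 1 else 0 := by
      intro v
      have h := congrFun (congrFun hinv v) vm
      rw [Matrix.mul_apply] at h
      rw [h, Matrix.one_apply]
    have rowB : ∀ v, (∑ u, B v u * d u) = z * d v - ∑ u, pathQvo L v u * d u := by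
      intro v
      have e : ∀ u, B v u * d u = (if v = u then z * d u else 0) - pathQvo L v u * d u := by
        intro u
        rw [hB, Matrix.sub_apply, Matrix.smul_apply, Matrix.one_apply, smul_eq_mul]
        split_ifs <;> ring
      simp_rw [e]
      rw [Finset.sum_sub_distrib, Finset.sum_ite_eq]
      simp
    set d' : ℕ → ℂ := fun k => if h : 1 ≤ k ∧ k + 1 ≤ L then d (mkVo L k h.1 h.2) else 0
      with hd'
    have hd'eq : ∀ k (h1 : 1 ≤ k) (h2 : k + 1 ≤ L), d' k = d (mkVo L k h1 h2) :=
      fun k h1 h2 => dif_pos ⟨h1, h2⟩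
    have E : ∀ k, 1 ≤ k → k + 1 ≤ L →
        z * d' k - (d' (k + 1) + d' (k - 1)) / 2 = if k = L - 1 then 1 else 0 := by
      intro k h1 h2
      have hr := row (mkVo L k h1 h2)
      rw [rowB, rowsum_vo L k hL h1 h2 d] at hr
      have e1 : d' (k + 1) = if h : k + 2 ≤ L then d (mkVo L (k + 1) (by omega) h) else 0 := by
        by_cases h : k + 2 ≤ L
        · rw [dif_pos h, hd'eq (k + 1) (by omega) (by omega)]
        · rw [dif_neg h]; exact dif_neg (by omega)
      have e2 : d' (k - 1) = if h : 2 ≤ k then d (mkVo L (k - 1) (by omega) (by omega)) else 0 := by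
        by_cases h : 2 ≤ k
        · rw [dif_pos h, hd'eq (k - 1) (by omega) (by omega)]
        · rw [dif_neg h]; exact dif_neg (by omega)
      have e3 : (if mkVo L k h1 h2 = vm then (1 : ℂ) else 0) = if k = L - 1 then 1 else 0 := by
        by_cases h : k = L - 1
        · subst h
          rw [if_pos rfl, if_pos rfl]
        · rw [if_neg h, if_neg]
          intro hcon
          exact h (congrArg (fun v : pathVo L => ((v.1 : Fin (L + 1)) : ℕ)) hcon)
      rw [hd'eq k h1 h2, e1, e2, ← e3]
      exact hr
    have key2 : ∀ k, 1 ≤ k → k + 1 ≤ L →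
        d' k = (Polynomial.Chebyshev.U ℂ ((k : ℤ) - 1)).eval z * d' 1 := by
      intro k
      induction k using Nat.strong_induction_on with
      | _ k ih =>
        intro h1 h2
        match k, h1, h2, ih with
        | 1, _, _, _ =>
          norm_num [Polynomial.Chebyshev.U_zero]
        | 2, _, h2, _ =>
          have E1 := E 1 (by omega) (by omega)
          rw [if_neg (by omega)] at E1
          have h0 : d' 0 = 0 := dif_neg (by omega)
          have hcast : ((2 : ℕ) : ℤ) - 1 = 1 := by norm_num
          rw [hcast, Polynomial.Chebyshev.U_one]
          simp only [Polynomial.eval_mul, Polynomial.eval_ofNat, Polynomial.eval_X]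
          have hn : (1 : ℕ) + 1 = 2 := rfl
          have hn2 : (1 : ℕ) - 1 = 0 := rfl
          rw [hn, hn2] at E1
          linear_combination (-2 : ℂ) * E1 - h0
        | (n + 3), _, h2, ih =>
          have En := E (n + 2) (by omega) (by omega)
          rw [if_neg (by omega)] at En
          have ha := ih (n + 2) (by omega) (by omega) (by omega)
          have hb := ih (n + 1) (by omega) (by omega) (by omega)
          have hca : ((n + 2 : ℕ) : ℤ) - 1 = (n : ℤ) + 1 := by push_cast; ring
          have hcb : ((n + 1 : ℕ) : ℤ) - 1 = (n : ℤ) := by push_cast; ring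
          have hcc : ((n + 3 : ℕ) : ℤ) - 1 = (n : ℤ) + 2 := by push_cast; ring
          rw [hca] at ha
          rw [hcb] at hb
          rw [hcc, Polynomial.Chebyshev.U_add_two]
          simp only [Polynomial.eval_sub, Polynomial.eval_mul, Polynomial.eval_ofNat,
            Polynomial.eval_X]
          have hn : n + 2 + 1 = n + 3 := rfl
          have hn2 : n + 2 - 1 = n + 1 := rfl
          rw [hn, hn2] at En
          linear_combination (-2 : ℂ) * En + 2 * z * ha - hb
    -- compute the double sum
    have hterm : ∀ u v : pathVo L,
        ((pathQ L 0 u.1 : ℝ) : ℂ) * B⁻¹ u v * ((pathQ L v.1 (Fin.last L) : ℝ) : ℂ)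
          = if (v.1 : ℕ) = L - 1 then (if (u.1 : ℕ) = 1 then B⁻¹ u v else 0) / 2 else 0 := by
      intro u v
      rw [pathQ_zero L (by omega) u.1, pathQ_int L v (Fin.last L)]
      rw [Complex.ofReal_div]
      have hv := vo_val v
      have hu := vo_val u
      simp only [Fin.val_last]
      split_ifs <;>
      first
      | rfl
      | (push_cast; ring1)
      | (exfalso; omega)
      | (exfalso; simp only [or_false, false_or, not_or] at *; omega)
      | norm_num
    have hsum : (∑ u : pathVo L, ∑ v : pathVo L,
        ((pathQ L 0 u.1 : ℝ) : ℂ) * B⁻¹ u v * ((pathQ L v.1 (Fin.last L) : ℝ) : ℂ))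
          = d' 1 / 2 := by
      simp_rw [hterm]
      have inner : ∀ u : pathVo L,
          (∑ v : pathVo L, if (v.1 : ℕ) = L - 1 then (if (u.1 : ℕ) = 1 then B⁻¹ u v else 0) / 2 else 0)
            = (if (u.1 : ℕ) = 1 then B⁻¹ u vm else 0) / 2 := by
        intro u
        exact sum_vo L (L - 1) (by omega) (by omega) _
      simp_rw [inner]
      rw [← Finset.sum_div]
      rw [sum_vo L 1 (by omega) (by omega) (fun u => B⁻¹ u vm)]
      rw [hd'eq 1 (by omega) (by omega)]
    have hq0L : ((pathQ L 0 (Fin.last L) : ℝ) : ℂ) = 0 := by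
      rw [pathQ_zero L (by omega), if_neg]
      · norm_num
      · simp only [Fin.val_last]; omega
    rw [hsum, hq0L, add_zero]
    -- final computation
    have hF := E (L - 1) (by omega) (by omega)
    rw [if_pos rfl] at hF
    have hdL : d' (L - 1 + 1) = 0 := dif_neg (by omega)
    by_cases h3 : 3 ≤ L
    · have ha := key2 (L - 1) (by omega) (by omega)
      have hb := key2 (L - 2) (by omega) (by omega)
      have hca : ((L - 1 : ℕ) : ℤ) - 1 = (L : ℤ) - 2 := by omega
      have hcb : ((L - 2 : ℕ) : ℤ) - 1 = (L : ℤ) - 3 := by omega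
      rw [hca] at ha
      rw [hcb] at hb
      have hU : Polynomial.Chebyshev.U ℂ ((L : ℤ) - 1)
          = 2 * Polynomial.X * Polynomial.Chebyshev.U ℂ ((L : ℤ) - 2)
            - Polynomial.Chebyshev.U ℂ ((L : ℤ) - 3) := by
        have h := Polynomial.Chebyshev.U_add_two ℂ ((L : ℤ) - 3)
        have e1 : (L : ℤ) - 3 + 2 = (L : ℤ) - 1 := by ring
        have e2 : (L : ℤ) - 3 + 1 = (L : ℤ) - 2 := by ring
        rw [e1, e2] at h
        exact h
      rw [hU]
      simp only [Polynomial.eval_sub, Polynomial.eval_mul, Polynomial.eval_ofNat,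
        Polynomial.eval_X]
      have hss : L - 1 - 1 = L - 2 := by omega
      rw [hss, hdL] at hF
      linear_combination hF - z * ha + hb / 2
    · have hL2 : L = 2 := by omega
      subst hL2
      have hd0 : d' (2 - 1 - 1) = 0 := dif_neg (by omega)
      rw [hdL, hd0] at hF
      have hcast : ((2 : ℕ) : ℤ) - 1 = 1 := by norm_num
      rw [hcast, Polynomial.Chebyshev.U_one]
      simp only [Polynomial.eval_mul, Polynomial.eval_ofNat, Polynomial.eval_X]
      linear_combination hF
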